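/- Let p ≥ q ≥ 1 be integers and let r be an integer with (p+q)/2 − 1 < r < p+q. Then for every π ∈ S_{p+q} and all i,j ∈ [p+q]: if 1 ≤ j ≤ p+q−r−1 then |A^{C^π}_{i→j}| ≤ p+q−r−j; if r+2 ≤ j ≤ p+q then |A^{C^π}_{i→j}| ≤ j−r−1; and in all other cases A^{C^π}_{i→j} is empty. -/

import Mathlib

open Equiv

/-- The ℓ∞-distance between two permutations of `Fin n`. -/
noncomputable def linfDist {n : ℕ} (f g : Perm (Fin n)) : ℕ :=
  Finset.univ.sup fun i : Fin n => (((f i).val : ℤ) - ((g i).val : ℤ)).natAbs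

/-- The distance from a permutation to a code `C`. -/
noncomputable def distToCode {n : ℕ} (f : Perm (Fin n)) (C : Set (Perm (Fin n))) : ℕ :=
  sInf (linfDist f '' C)

/-- The covering radius of a code `C ⊆ Sₙ`. -/
noncomputable def coveringRadius {n : ℕ} (C : Set (Perm (Fin n))) : ℕ :=
  sSup (Set.range fun f : Perm (Fin n) => distToCode f C)

/-- The relabeling `C^π = π C π⁻¹`. -/
def conjCode {n : ℕ} (π : Perm (Fin n)) (C : Set (Perm (Fin n))) : Set (Perm (Fin n)) :=
  (fun g => π * g * π⁻¹) '' C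

/-- Maximum covering radius over all relabelings. -/
noncomputable def Lmax {n : ℕ} (C : Set (Perm (Fin n))) : ℕ :=
  sSup (Set.range fun π : Perm (Fin n) => coveringRadius (conjCode π C))

/-- Minimum covering radius over all relabelings. -/
noncomputable def Lmin {n : ℕ} (C : Set (Perm (Fin n))) : ℕ :=
  sInf (Set.range fun π : Perm (Fin n) => coveringRadius (conjCode π C))

/-- The `(p,q)`-type group `G_{p,q} = ⟨(1,…,p), (p+1,…,p+q)⟩ ⊆ S_{p+q}`
(using `0`-indexed `Fin (p+q)`). -/
def Gpq (p q : ℕ) : Subgroup (Perm (Fin (p + q))) :=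
  Subgroup.closure
    { ((List.finRange p).map (Fin.castLE (Nat.le_add_right p q))).formPerm,
      ((List.finRange q).map (Fin.natAdd p)).formPerm }

/-- The transitive cyclic group `Gₙ = ⟨(1,2,…,n)⟩`. -/
def Gcyc (n : ℕ) : Subgroup (Perm (Fin n)) := Subgroup.closure {finRotate n}

/-- The natural dihedral group
`Dₙ = ⟨(1,2,…,n), ∏_{i=1}^{⌊n/2⌋} (i, n-i)⟩` (using `0`-indexed `Fin n`). -/
def Dn (n : ℕ) : Subgroup (Perm (Fin n)) :=
  Subgroup.closure
    { finRotate n,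
      (((List.finRange (n / 2)).map fun i =>
        Equiv.swap (⟨i.val, by have := i.isLt; omega⟩ : Fin n)
          (⟨n - 2 - i.val, by have := i.isLt; omega⟩ : Fin n)).prod) }

open Classical in
/-- For the relabeled code `C^π = π G_{p,q} π⁻¹`, the set `A^{C^π}_{i→j}`:
the set of `g⁻¹(π(1))` (resp. `g⁻¹(π(p+1))`) over all `g ∈ C^π` with `|g(i) - j| > r`,
according to whether `i ∈ H = {π(1),…,π(p)}` or `i ∈ R = {π(p+1),…,π(p+q)}`. -/
noncomputable def AsetRel (p q : ℕ) (hq : 0 < q) (π : Perm (Fin (p + q))) (r : ℕ)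
    (i j : Fin (p + q)) : Set (Fin (p + q)) :=
  if i ∈ π '' {x : Fin (p + q) | (x : ℕ) < p} then
    {x | ∃ g ∈ conjCode π (Gpq p q : Set (Perm (Fin (p + q)))),
      r < (((g i).val : ℤ) - ((j : ℕ) : ℤ)).natAbs ∧
      x = g⁻¹ (π ⟨0, i.pos⟩)}
  else
    {x | ∃ g ∈ conjCode π (Gpq p q : Set (Perm (Fin (p + q)))),
      r < (((g i).val : ℤ) - ((j : ℕ) : ℤ)).natAbs ∧
      x = g⁻¹ (π ⟨p, Nat.lt_add_of_pos_right hq⟩)}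

namespace Stmt16Aux

variable {p q : ℕ}

lemma Perm.inv_apply_self {α : Type*} (f : Perm α) (x : α) : f⁻¹ (f x) = x :=
  f.symm_apply_apply x

lemma Perm.apply_inv_self {α : Type*} (f : Perm α) (x : α) : f (f⁻¹ x) = x :=
  f.apply_symm_apply x

/-- The list underlying the first cycle. -/
abbrev Lone (p q : ℕ) : List (Fin (p + q)) :=
  (List.finRange p).map (Fin.castLE (Nat.le_add_right p q))

/-- The list underlying the second cycle. -/
abbrev Ltwo (p q : ℕ) : List (Fin (p + q)) :=
  (List.finRange q).map (Fin.natAdd p)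

abbrev cone (p q : ℕ) : Perm (Fin (p + q)) := (Lone p q).formPerm
abbrev ctwo (p q : ℕ) : Perm (Fin (p + q)) := (Ltwo p q).formPerm

lemma mem_Lone {x : Fin (p + q)} : x ∈ Lone p q ↔ (x : ℕ) < p := by
  simp only [Lone, List.mem_map, List.mem_finRange, true_and]
  constructor
  · rintro ⟨a, rfl⟩; exact a.isLt
  · intro h; exact ⟨⟨x.val, h⟩, by ext; rfl⟩

lemma mem_Ltwo {x : Fin (p + q)} : x ∈ Ltwo p q ↔ p ≤ (x : ℕ) := by
  simp only [Ltwo, List.mem_map, List.mem_finRange, true_and]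
  constructor
  · rintro ⟨a, rfl⟩; simp [Fin.natAdd]
  · intro h
    refine ⟨⟨x.val - p, by omega⟩, ?_⟩
    ext; simp [Fin.natAdd]; omega

lemma nodup_Lone : (Lone p q).Nodup :=
  (List.nodup_finRange p).map (Fin.castLE_injective _)

lemma nodup_Ltwo : (Ltwo p q).Nodup := by
  refine (List.nodup_finRange q).map ?_
  intro a b hab
  have : ((Fin.natAdd p a : Fin (p + q)) : ℕ) = ((Fin.natAdd p b : Fin (p + q)) : ℕ) := by
    rw [hab]
  simp [Fin.natAdd] at this
  exact Fin.ext this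

lemma disj : (cone p q).Disjoint (ctwo p q) := by
  intro x
  rcases lt_or_ge (x : ℕ) p with h | h
  · exact Or.inr (List.formPerm_apply_of_notMem (by rw [mem_Ltwo]; omega))
  · exact Or.inl (List.formPerm_apply_of_notMem (by rw [mem_Lone]; omega))

lemma comm : Commute (cone p q) (ctwo p q) := disj.commute

lemma decomp {h : Perm (Fin (p + q))} (hh : h ∈ Gpq p q) :
    ∃ a b : ℤ, h = cone p q ^ a * ctwo p q ^ b := by
  have hcomm : Commute (cone p q) (ctwo p q) := comm
  refine Subgroup.closure_induction ?_ ⟨0, 0, by simp⟩ ?_ ?_ hh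
  · rintro x (rfl | rfl)
    · exact ⟨1, 0, by simp⟩
    · exact ⟨0, 1, by simp⟩
  · rintro x y _ _ ⟨a, b, rfl⟩ ⟨a', b', rfl⟩
    refine ⟨a + a', b + b', ?_⟩
    rw [(hcomm.symm.zpow_zpow b a').mul_mul_mul_comm, ← zpow_add, ← zpow_add]
  · rintro x _ ⟨a, b, rfl⟩
    refine ⟨-a, -b, ?_⟩
    rw [mul_inv_rev, ← zpow_neg, ← zpow_neg, (hcomm.symm.zpow_zpow (-b) (-a)).eq]

lemma isCycleOn_cone : (cone p q).IsCycleOn ((Lone p q).toFinset : Set (Fin (p + q))) := by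
  rw [List.coe_toFinset]; exact nodup_Lone.isCycleOn_formPerm

lemma isCycleOn_ctwo : (ctwo p q).IsCycleOn ((Ltwo p q).toFinset : Set (Fin (p + q))) := by
  rw [List.coe_toFinset]; exact nodup_Ltwo.isCycleOn_formPerm

lemma fix_block {h : Perm (Fin (p + q))} (hh : h ∈ Gpq p q) {x y : Fin (p + q)}
    (hxy : (x : ℕ) < p ↔ (y : ℕ) < p) (hfix : h x = x) : h y = y := by
  obtain ⟨a, b, rfl⟩ := decomp hh
  by_cases hx : (x : ℕ) < p
  · have hy : (y : ℕ) < p := hxy.mp hx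
    have hc2x : (ctwo p q ^ b) x = x :=
      Perm.zpow_apply_eq_self_of_apply_eq_self
        (List.formPerm_apply_of_notMem (by rw [mem_Ltwo]; omega)) b
    have hc1x : (cone p q ^ a) x = x := by
      have := hfix
      rw [Perm.mul_apply, hc2x] at this
      exact this
    have hxm : x ∈ (Lone p q).toFinset := by rw [List.mem_toFinset, mem_Lone]; exact hx
    have hym : y ∈ (Lone p q).toFinset := by rw [List.mem_toFinset, mem_Lone]; exact hy
    have hdvd := (isCycleOn_cone.zpow_apply_eq hxm).mp hc1x
    have hc1y : (cone p q ^ a) y = y := (isCycleOn_cone.zpow_apply_eq hym).mpr hdvd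
    have hc2y : (ctwo p q ^ b) y = y :=
      Perm.zpow_apply_eq_self_of_apply_eq_self
        (List.formPerm_apply_of_notMem (by rw [mem_Ltwo]; omega)) b
    rw [Perm.mul_apply, hc2y, hc1y]
  · have hy : ¬ (y : ℕ) < p := fun hy => hx (hxy.mpr hy)
    have hxm2 : x ∈ Ltwo p q := by rw [mem_Ltwo]; omega
    have hc2xmem : (ctwo p q ^ b) x ∈ Ltwo p q :=
      List.form_perm_zpow_apply_mem_imp_mem _ _ hxm2 b
    have hc1fix : (cone p q ^ a) ((ctwo p q ^ b) x) = (ctwo p q ^ b) x :=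
      Perm.zpow_apply_eq_self_of_apply_eq_self
        (List.formPerm_apply_of_notMem (by rw [mem_Lone]; have := mem_Ltwo.mp hc2xmem; omega)) a
    have hc2x : (ctwo p q ^ b) x = x := by
      have := hfix
      rw [Perm.mul_apply, hc1fix] at this
      exact this
    have hxm : x ∈ (Ltwo p q).toFinset := List.mem_toFinset.mpr hxm2
    have hym : y ∈ (Ltwo p q).toFinset := by rw [List.mem_toFinset, mem_Ltwo]; omega
    have hdvd := (isCycleOn_ctwo.zpow_apply_eq hxm).mp hc2x
    have hc2y : (ctwo p q ^ b) y = y := (isCycleOn_ctwo.zpow_apply_eq hym).mpr hdvd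
    have hc1y : (cone p q ^ a) y = y :=
      Perm.zpow_apply_eq_self_of_apply_eq_self
        (List.formPerm_apply_of_notMem (by rw [mem_Lone]; omega)) a
    rw [Perm.mul_apply, hc2y, hc1y]

lemma block_iff {h : Perm (Fin (p + q))} (hh : h ∈ Gpq p q) (x : Fin (p + q)) :
    ((h x : Fin (p + q)) : ℕ) < p ↔ (x : ℕ) < p := by
  obtain ⟨a, b, rfl⟩ := decomp hh
  by_cases hx : (x : ℕ) < p
  · have hc2x : (ctwo p q ^ b) x = x :=
      Perm.zpow_apply_eq_self_of_apply_eq_self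
        (List.formPerm_apply_of_notMem (by rw [mem_Ltwo]; omega)) b
    have hmem : (cone p q ^ a) x ∈ Lone p q :=
      List.form_perm_zpow_apply_mem_imp_mem _ _ (mem_Lone.mpr hx) a
    rw [Perm.mul_apply, hc2x]
    simpa [mem_Lone.mp hmem] using hx
  · have hxm2 : x ∈ Ltwo p q := by rw [mem_Ltwo]; omega
    have hc2xmem : (ctwo p q ^ b) x ∈ Ltwo p q :=
      List.form_perm_zpow_apply_mem_imp_mem _ _ hxm2 b
    have hc1fix : (cone p q ^ a) ((ctwo p q ^ b) x) = (ctwo p q ^ b) x :=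
      Perm.zpow_apply_eq_self_of_apply_eq_self
        (List.formPerm_apply_of_notMem (by rw [mem_Lone]; have := mem_Ltwo.mp hc2xmem; omega)) a
    rw [Perm.mul_apply, hc1fix]
    have := mem_Ltwo.mp hc2xmem
    constructor
    · omega
    · intro hh'; omega

lemma inv_eq_of_apply_eq {π g1 g2 : Perm (Fin (p + q))}
    (hg1 : g1 ∈ conjCode π (Gpq p q : Set (Perm (Fin (p + q)))))
    (hg2 : g2 ∈ conjCode π (Gpq p q : Set (Perm (Fin (p + q)))))
    {i t : Fin (p + q)} (hblock : ((π⁻¹ i : Fin (p + q)) : ℕ) < p ↔ (t : ℕ) < p)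
    (heq : g1 i = g2 i) : g1⁻¹ (π t) = g2⁻¹ (π t) := by
  obtain ⟨h1, hh1, rfl⟩ := hg1
  obtain ⟨h2, hh2, rfl⟩ := hg2
  have hh1' : h1 ∈ Gpq p q := hh1
  have hh2' : h2 ∈ Gpq p q := hh2
  set x : Fin (p + q) := π⁻¹ i with hxdef
  have hx12 : h1 x = h2 x := by
    have : π (h1 (π⁻¹ i)) = π (h2 (π⁻¹ i)) := by
      simpa [Perm.mul_apply] using heq
    exact π.injective this
  have hk : h1⁻¹ * h2 ∈ Gpq p q := mul_mem (inv_mem hh1') hh2'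
  have hkx : (h1⁻¹ * h2) x = x := by
    rw [Perm.mul_apply, ← hx12, Perm.inv_apply_self]
  have hy : ((h1⁻¹ (t : Fin (p + q)) : Fin (p + q)) : ℕ) < p ↔ (t : ℕ) < p :=
    block_iff (inv_mem hh1') t
  have hxy : (x : ℕ) < p ↔ ((h1⁻¹ t : Fin (p + q)) : ℕ) < p := by
    rw [hy]; exact hblock
  have hky : (h1⁻¹ * h2) (h1⁻¹ t) = h1⁻¹ t := fix_block hk hxy hkx
  have h2inv : h2⁻¹ t = h1⁻¹ t := by
    have : h2 (h1⁻¹ t) = t := by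
      have := congrArg h1 hky
      rw [Perm.mul_apply, Perm.apply_inv_self] at this
      rw [this, Perm.apply_inv_self]
    rw [Perm.inv_eq_iff_eq]
    exact this.symm
  simp only [mul_inv_rev, inv_inv, Perm.mul_apply, Perm.inv_apply_self]
  rw [h2inv]

lemma Aset_core (p q : ℕ) (π : Perm (Fin (p + q))) (r : ℕ) (i j t : Fin (p + q))
    (hblock : ((π⁻¹ i : Fin (p + q)) : ℕ) < p ↔ (t : ℕ) < p)
    (T : Finset (Fin (p + q)))
    (hT : ∀ v : Fin (p + q), r < (((v : ℕ) : ℤ) - ((j : ℕ) : ℤ)).natAbs → v ∈ T) :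
    {x | ∃ g ∈ conjCode π (Gpq p q : Set (Perm (Fin (p + q)))),
      r < (((g i).val : ℤ) - ((j : ℕ) : ℤ)).natAbs ∧
      x = g⁻¹ (π t)}.ncard ≤ T.card := by
  classical
  rw [← Set.ncard_coe_finset]
  refine Set.ncard_le_ncard_of_injOn
    (fun x => if h : ∃ g ∈ conjCode π (Gpq p q : Set (Perm (Fin (p + q)))),
      r < (((g i).val : ℤ) - ((j : ℕ) : ℤ)).natAbs ∧ x = g⁻¹ (π t)
      then h.choose i else i) ?_ ?_ (T : Set (Fin (p + q))).toFinite
  · intro x hx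
    have hx' : ∃ g ∈ conjCode π (Gpq p q : Set (Perm (Fin (p + q)))),
        r < (((g i).val : ℤ) - ((j : ℕ) : ℤ)).natAbs ∧ x = g⁻¹ (π t) := hx
    simp only [hx', dif_pos]
    obtain ⟨_, habs, _⟩ := hx'.choose_spec
    exact Finset.mem_coe.mpr (hT _ habs)
  · intro x1 h1m x2 h2m hf
    have h1' : ∃ g ∈ conjCode π (Gpq p q : Set (Perm (Fin (p + q)))),
        r < (((g i).val : ℤ) - ((j : ℕ) : ℤ)).natAbs ∧ x1 = g⁻¹ (π t) := h1m
    have h2' : ∃ g ∈ conjCode π (Gpq p q : Set (Perm (Fin (p + q)))),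
        r < (((g i).val : ℤ) - ((j : ℕ) : ℤ)).natAbs ∧ x2 = g⁻¹ (π t) := h2m
    simp only at hf
    rw [dif_pos h1', dif_pos h2'] at hf
    obtain ⟨hg1, _, hx1⟩ := h1'.choose_spec
    obtain ⟨hg2, _, hx2⟩ := h2'.choose_spec
    rw [hx1, hx2, inv_eq_of_apply_eq hg1 hg2 hblock hf]

lemma Aset_ncard_le (p q : ℕ) (hq : 0 < q) (hp : 0 < p) (π : Perm (Fin (p + q)))
    (r : ℕ) (i j : Fin (p + q)) (T : Finset (Fin (p + q)))
    (hT : ∀ v : Fin (p + q), r < (((v : ℕ) : ℤ) - ((j : ℕ) : ℤ)).natAbs → v ∈ T) :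
    (AsetRel p q hq π r i j).ncard ≤ T.card := by
  unfold AsetRel
  split_ifs with hmem
  · refine Aset_core p q π r i j _ ?_ T hT
    obtain ⟨x, hx, rfl⟩ := hmem
    simp only [Perm.inv_apply_self, Fin.val_mk]
    exact ⟨fun _ => hp, fun _ => hx⟩
  · refine Aset_core p q π r i j _ ?_ T hT
    have hni : ¬ ((π⁻¹ i : Fin (p + q)) : ℕ) < p := fun h => hmem ⟨π⁻¹ i, h, by simp⟩
    simp only [Fin.val_mk]
    exact ⟨fun h => absurd h hni, fun h => absurd h (lt_irrefl p)⟩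

end Stmt16Aux

/-- bounds on `|A^{C^π}_{i→j}|` when `(p+q)/2 − 1 < r < p+q`
(the first inequality is phrased as `p + q < 2r + 2`). With 0-indexed `j`, the paper value
`j+1 ∈ B = [p+q-r-1]` gives `|A| ≤ p+q-r-(j+1)`; `j+1 ∈ T = [r+2, p+q]` gives
`|A| ≤ (j+1)-r-1`; otherwise `A = ∅`. -/
theorem stmt_16 (p q : ℕ) (hq : 1 ≤ q) (hpq : q ≤ p) (r : ℕ)
    (hr1 : p + q < 2 * r + 2) (hr2 : r < p + q) (π : Perm (Fin (p + q)))
    (i j : Fin (p + q)) :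
    ((j : ℕ) + r + 2 ≤ p + q →
      (AsetRel p q hq π r i j).ncard ≤ p + q - r - ((j : ℕ) + 1)) ∧
    (r + 1 ≤ (j : ℕ) →
      (AsetRel p q hq π r i j).ncard ≤ (j : ℕ) - r) ∧
    (¬((j : ℕ) + r + 2 ≤ p + q) ∧ ¬(r + 1 ≤ (j : ℕ)) →
      AsetRel p q hq π r i j = ∅) := by
  have hp : 0 < p := lt_of_lt_of_le hq hpq
  refine ⟨?_, ?_, ?_⟩
  · intro hj
    have key := Stmt16Aux.Aset_ncard_le p q hq hp π r i j
      (Finset.Ici (⟨(j : ℕ) + r + 1, by omega⟩ : Fin (p + q))) ?_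
    · rw [Fin.card_Ici] at key
      simp only [Fin.val_mk] at key
      omega
    · intro v habs
      rw [Finset.mem_Ici, Fin.le_def]
      simp only [Fin.val_mk]
      have hv := v.isLt
      have hj' := j.isLt
      omega
  · intro hj
    have key := Stmt16Aux.Aset_ncard_le p q hq hp π r i j
      (Finset.Iio (⟨(j : ℕ) - r, by have := j.isLt; omega⟩ : Fin (p + q))) ?_
    · rw [Fin.card_Iio] at key
      simp only [Fin.val_mk] at key
      omega
    · intro v habs
      rw [Finset.mem_Iio, Fin.lt_def]
      simp only [Fin.val_mk]
      have hv := v.isLt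
      have hj' := j.isLt
      omega
  · rintro ⟨h1, h2⟩
    have himp : ∀ g : Perm (Fin (p + q)),
        ¬ (r < (((g i).val : ℤ) - ((j : ℕ) : ℤ)).natAbs) := by
      intro g habs
      have hv := (g i).isLt
      have hj' := j.isLt
      omega
    unfold AsetRel
    split_ifs with hmem <;>
    · ext x
      simp only [Set.mem_setOf_eq, Set.mem_empty_iff_false, iff_false]
      rintro ⟨g, _, habs, _⟩
      exact himp g habs
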